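/- Let à be a symmetric doubly stochastic N×N matrix with eigenvalues 1 = λ₀ > Re(λ₁) ≥ … (eigenvalue 1 simple, others with real part < 1), N⁰, d > 0, and set U_k = I + (d/(N⁰ + d(k+1)))(Ã − I). Then the sequence of vectors E[Ψ^t] − E[Φ^t] = Z⁰(Ã − I)∏_{j=1}^{t} U_j has norm of order O(t^{Re(λ₁)−1}), where λ₁ is the second largest eigenvalue of Ã; in particular it tends to 0 as t → ∞. -/

import Mathlib

open Filter Matrix Real

lemma stmt12_fac (N0 d s : ℝ) (hN0 : 0 < N0) (hd : 0 < d) (hs0 : 0 ≤ s) (hs2 : s ≤ 2)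
    (k : ℕ) (hk : 2 ≤ k) :
    |1 - s * (d / (N0 + d * k))| ≤ ((N0 + d * k) / (N0 + d * (k + 1))) ^ s := by
  have hk' : (2:ℝ) ≤ (k:ℝ) := by exact_mod_cast hk
  have ha : (0:ℝ) < N0 + d * k := by nlinarith
  have hb : (0:ℝ) < N0 + d * (k + 1) := by nlinarith
  have hc : 0 < d / (N0 + d * k) := div_pos hd ha
  have hhalf : d / (N0 + d * k) ≤ 1 / 2 := by
    rw [div_le_div_iff₀ ha (by norm_num)]
    nlinarith
  have hx1 : s * (d / (N0 + d * k)) ≤ 1 := by nlinarith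
  have hx0 : 0 ≤ s * (d / (N0 + d * k)) := by positivity
  rw [abs_of_nonneg (by linarith)]
  have h1 : 1 - s * (d / (N0 + d * k)) ≤ Real.exp (-(s * (d / (N0 + d * k)))) := by
    have := Real.add_one_le_exp (-(s * (d / (N0 + d * k))))
    linarith
  refine h1.trans ?_
  rw [Real.rpow_def_of_pos (by positivity), Real.exp_le_exp]
  have hlog : Real.log ((N0 + d * (k + 1)) / (N0 + d * k)) ≤ d / (N0 + d * k) := by
    have h := Real.log_le_sub_one_of_pos (div_pos hb ha)
    have heq : (N0 + d * (k + 1)) / (N0 + d * k) - 1 = d / (N0 + d * k) := by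
      field_simp; ring
    linarith [heq ▸ h]
  have hlog2 : Real.log ((N0 + d * k) / (N0 + d * (k + 1)))
      = -Real.log ((N0 + d * (k + 1)) / (N0 + d * k)) := by
    rw [← Real.log_inv]
    congr 1
    field_simp
  rw [hlog2]
  nlinarith [mul_le_mul_of_nonneg_left hlog hs0]

lemma stmt12_key (N0 d lam lam₁ : ℝ) (hN0 : 0 < N0) (hd : 0 < d) (hm1 : -1 ≤ lam)
    (hll : lam ≤ lam₁) (h1 : lam₁ < 1) (t : ℕ) (ht : 1 ≤ t) :
    |∏ j ∈ Finset.range t, (1 + d / (N0 + d * (↑(j + 1) : ℝ)) * (lam - 1))| ≤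
      (3 * ((N0 + 2 * d) / d) ^ (1 - lam₁)) * (t : ℝ) ^ (lam₁ - 1) := by
  set s := 1 - lam with hs
  have hs0 : 0 ≤ s := by rw [hs]; linarith
  have hs2 : s ≤ 2 := by rw [hs]; linarith
  have hss : 1 - lam₁ ≤ s := by rw [hs]; linarith
  have hs0' : 0 < 1 - lam₁ := by linarith
  have main : ∀ t : ℕ, 1 ≤ t →
      ∏ j ∈ Finset.range t, |1 + d / (N0 + d * (↑(j + 1) : ℝ)) * (lam - 1)| ≤
        3 * ((N0 + 2 * d) / (N0 + d * (↑(t + 1) : ℝ))) ^ s := by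
    intro t ht
    induction t with
    | zero => omega
    | succ n ih =>
      rcases Nat.lt_or_ge 1 (n+1) with h | h
      case _ =>
        have hn : 1 ≤ n := by omega
        have ihn := ih hn
        rw [Finset.prod_range_succ]
        have han : (0:ℝ) < N0 + d * (↑(n+1):ℝ) := by positivity
        have han2 : (0:ℝ) < N0 + d * (↑(n+1+1):ℝ) := by positivity
        have hfac : |1 + d / (N0 + d * (↑(n + 1) : ℝ)) * (lam - 1)| ≤
            ((N0 + d * (↑(n+1):ℝ)) / (N0 + d * (↑(n+1+1):ℝ))) ^ s := by
          have h2 := stmt12_fac N0 d s hN0 hd hs0 hs2 (n+1) (by omega)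
          have heq : 1 + d / (N0 + d * (↑(n + 1) : ℝ)) * (lam - 1)
              = 1 - s * (d / (N0 + d * (↑(n+1):ℝ))) := by rw [hs]; ring
          rw [heq]
          convert h2 using 3 <;> push_cast <;> ring
        have hprodnn : (0:ℝ) ≤ ∏ j ∈ Finset.range n,
            |1 + d / (N0 + d * (↑(j + 1) : ℝ)) * (lam - 1)| :=
          Finset.prod_nonneg fun _ _ => abs_nonneg _
        calc (∏ j ∈ Finset.range n, |1 + d / (N0 + d * (↑(j + 1) : ℝ)) * (lam - 1)|) *
              |1 + d / (N0 + d * (↑(n + 1) : ℝ)) * (lam - 1)|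
            ≤ (3 * ((N0 + 2 * d) / (N0 + d * (↑(n + 1) : ℝ))) ^ s) *
              (((N0 + d * (↑(n+1):ℝ)) / (N0 + d * (↑(n+1+1):ℝ))) ^ s) :=
              mul_le_mul ihn hfac (abs_nonneg _) (by positivity)
          _ = 3 * ((N0 + 2 * d) / (N0 + d * (↑(n + 1 + 1) : ℝ))) ^ s := by
              rw [mul_assoc, ← Real.mul_rpow (by positivity) (by positivity)]
              congr 2
              field_simp
      case _ =>
        have hn : n = 0 := by omega
        subst hn
        rw [Finset.prod_range_one]
        have hbase : N0 + d * ((↑(1+1):ℝ)) = N0 + 2 * d := by push_cast; ring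
        push_cast
        norm_num
        have hone : ((N0 + 2*d) / (N0 + d * (2:ℝ))) = 1 := by
          rw [div_eq_one_iff_eq (by positivity)]; ring
        rw [hone, Real.one_rpow, mul_one]
        have hc1 : d / (N0 + d) ≤ 1 := by
          rw [div_le_one (by positivity)]; nlinarith
        have hc0 : 0 < d / (N0 + d) := by positivity
        rw [abs_le]
        constructor <;> nlinarith
  -- now conclude
  have habs : |∏ j ∈ Finset.range t, (1 + d / (N0 + d * (↑(j + 1) : ℝ)) * (lam - 1))| =
      ∏ j ∈ Finset.range t, |1 + d / (N0 + d * (↑(j + 1) : ℝ)) * (lam - 1)| :=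
    Finset.abs_prod _ _
  rw [habs]
  have ht' : (1:ℝ) ≤ (t:ℝ) := by exact_mod_cast ht
  have htp : (0:ℝ) < t := by linarith
  refine (main t ht).trans ?_
  have hb1 : (0:ℝ) < (N0 + 2 * d) / (N0 + d * (↑(t + 1) : ℝ)) := by positivity
  have hb2 : (N0 + 2 * d) / (N0 + d * (↑(t + 1) : ℝ)) ≤ 1 := by
    rw [div_le_one (by positivity)]; push_cast; nlinarith
  have step1 : ((N0 + 2 * d) / (N0 + d * (↑(t + 1) : ℝ))) ^ s ≤
      ((N0 + 2 * d) / (N0 + d * (↑(t + 1) : ℝ))) ^ (1 - lam₁) :=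
    Real.rpow_le_rpow_of_exponent_ge hb1 hb2 hss
  have step2 : ((N0 + 2 * d) / (N0 + d * (↑(t + 1) : ℝ))) ^ (1 - lam₁) ≤
      ((N0 + 2 * d) / d) ^ (1 - lam₁) * (t:ℝ) ^ (lam₁ - 1) := by
    have hle : (N0 + 2 * d) / (N0 + d * (↑(t + 1) : ℝ)) ≤ (N0 + 2 * d) / d * (t:ℝ)⁻¹ := by
      have heq : (N0 + 2 * d) / d * (t:ℝ)⁻¹ = (N0 + 2 * d) / (d * (t:ℝ)) := by
        rw [← div_eq_mul_inv, div_div]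
      rw [heq, div_le_div_iff₀ (by positivity) (by positivity)]
      push_cast
      nlinarith
    calc ((N0 + 2 * d) / (N0 + d * (↑(t + 1) : ℝ))) ^ (1 - lam₁)
        ≤ ((N0 + 2 * d) / d * (t:ℝ)⁻¹) ^ (1 - lam₁) :=
          Real.rpow_le_rpow (le_of_lt hb1) hle (le_of_lt hs0')
      _ = ((N0 + 2 * d) / d) ^ (1 - lam₁) * (t:ℝ) ^ (lam₁ - 1) := by
          rw [Real.mul_rpow (by positivity) (by positivity),
            Real.inv_rpow (by positivity), ← Real.rpow_neg (by positivity)]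
          norm_num
  calc (3:ℝ) * ((N0 + 2 * d) / (N0 + d * (↑(t + 1) : ℝ))) ^ s
      ≤ 3 * (((N0 + 2 * d) / d) ^ (1 - lam₁) * (t:ℝ) ^ (lam₁ - 1)) := by
        have := step1.trans step2
        nlinarith [this]
    _ = (3 * ((N0 + 2 * d) / d) ^ (1 - lam₁)) * (t : ℝ) ^ (lam₁ - 1) := by ring


lemma stmt12_perron {N : ℕ} {A : Matrix (Fin N) (Fin N) ℝ} (hnonneg : ∀ i j, 0 ≤ A i j)
    (hrow : ∀ i, ∑ j, A i j = 1) {μ : ℝ} {v : Fin N → ℝ} (hv : v ≠ 0)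
    (hAv : A.mulVec v = μ • v) : |μ| ≤ 1 := by
  obtain ⟨x, hx⟩ := Function.ne_iff.mp hv
  obtain ⟨i, -, hi⟩ := Finset.exists_max_image Finset.univ (fun i => |v i|)
    ⟨x, Finset.mem_univ x⟩
  have hvi : 0 < |v i| := lt_of_lt_of_le (abs_pos.mpr hx) (hi x (Finset.mem_univ x))
  have h1 : |μ| * |v i| ≤ 1 * |v i| := by
    have hAvi := congrFun hAv i
    rw [one_mul]
    calc |μ| * |v i| = |(μ • v) i| := by rw [Pi.smul_apply, smul_eq_mul, abs_mul]
      _ = |(A.mulVec v) i| := by rw [hAvi]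
      _ = |∑ j, A i j * v j| := by rw [Matrix.mulVec, dotProduct]
      _ ≤ ∑ j, |A i j * v j| := Finset.abs_sum_le_sum_abs _ _
      _ ≤ ∑ j, A i j * |v i| := by
          apply Finset.sum_le_sum
          intro j _
          rw [abs_mul, abs_of_nonneg (hnonneg i j)]
          exact mul_le_mul_of_nonneg_left (hi j (Finset.mem_univ j)) (hnonneg i j)
      _ = |v i| := by rw [← Finset.sum_mul, hrow i, one_mul]
  exact le_of_mul_le_mul_right h1 hvi

section
variable {N : ℕ} (U : ℕ → Matrix (Fin N) (Fin N) ℝ)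

lemma stmt12_vecMul_prod (v : Fin N → ℝ) (g : ℕ → ℝ)
    (hUv : ∀ k, Matrix.vecMul v (U k) = g k • v) (t : ℕ) :
    Matrix.vecMul v (((List.range t).map (fun j => U (j + 1))).prod) =
      (∏ j ∈ Finset.range t, g (j + 1)) • v := by
  induction t with
  | zero => simp [Matrix.vecMul_one]
  | succ n ih =>
    rw [List.range_succ, List.map_append, List.prod_append, List.map_singleton,
      List.prod_singleton, ← Matrix.vecMul_vecMul, ih, Matrix.smul_vecMul, hUv,
      Finset.prod_range_succ, smul_smul]
end


lemma stmt12_vecMul_smul_mat {N : ℕ} (x : Fin N → ℝ) (c : ℝ) (M : Matrix (Fin N) (Fin N) ℝ) :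
    Matrix.vecMul x (c • M) = c • Matrix.vecMul x M := by
  ext j
  simp [Matrix.vecMul, dotProduct, Finset.mul_sum, mul_comm, mul_left_comm]

theorem stmt_12 (N : ℕ) (A : Matrix (Fin N) (Fin N) ℝ)
    (hnonneg : ∀ i j, 0 ≤ A i j) (hsym : A.IsSymm)
    (hrow : ∀ i, ∑ j, A i j = 1)
    (hsimple : ∀ v : Fin N → ℝ, A.mulVec v = v → ∃ c : ℝ, v = fun _ => c)
    (lam₁ : ℝ) (hlam₁ : lam₁ < 1)
    (heig : ∀ (μ : ℝ) (v : Fin N → ℝ), v ≠ 0 → A.mulVec v = μ • v → μ = 1 ∨ μ ≤ lam₁)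
    (N0 d : ℝ) (hN0 : 0 < N0) (hd : 0 < d)
    (Z0 : Fin N → ℝ) (hZ0 : ∀ i, Z0 i ∈ Set.Icc (0:ℝ) 1)
    (U : ℕ → Matrix (Fin N) (Fin N) ℝ)
    (hU : ∀ j, U j = 1 + (d / (N0 + d * j)) • (A - 1)) :
    (∃ c : ℝ, ∀ᶠ t : ℕ in atTop,
        ‖Matrix.vecMul Z0 ((A - 1) * ((List.range t).map (fun j => U (j + 1))).prod)‖ ≤
          c * (t : ℝ) ^ (lam₁ - 1)) ∧
    Tendsto
      (fun t : ℕ => Matrix.vecMul Z0 ((A - 1) * ((List.range t).map (fun j => U (j + 1))).prod))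
      atTop (nhds 0) := by
  classical
  have hA : A.IsHermitian := by
    rw [Matrix.IsHermitian, Matrix.conjTranspose_eq_transpose_of_trivial]
    exact hsym
  set lam : Fin N → ℝ := hA.eigenvalues with hlam
  set v : Fin N → (Fin N → ℝ) := fun i => ⇑(hA.eigenvectorBasis i) with hv
  set L : EuclideanSpace ℝ (Fin N) ≃ₗ[ℝ] (Fin N → ℝ) := WithLp.linearEquiv 2 ℝ (Fin N → ℝ)
  set a : Fin N → ℝ := fun i => hA.eigenvectorBasis.repr (L.symm Z0) i with ha
  -- decomposition of Z0
  have hZsum : Z0 = ∑ i, a i • v i := by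
    have h1 := hA.eigenvectorBasis.sum_repr (L.symm Z0)
    have h2 := congrArg L h1
    rw [map_sum] at h2
    simp only [_root_.map_smul] at h2
    rw [L.apply_symm_apply] at h2
    exact h2.symm
  -- left eigenvector facts
  have hleft : ∀ i, Matrix.vecMul (v i) A = lam i • v i := by
    intro i
    have h1 : Matrix.vecMul (v i) Aᵀ = A.mulVec (v i) := Matrix.vecMul_transpose A (v i)
    rw [hsym] at h1
    rw [h1]
    exact hA.mulVec_eigenvectorBasis i
  have hAm1 : ∀ i, Matrix.vecMul (v i) (A - 1) = (lam i - 1) • v i := by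
    intro i
    rw [Matrix.vecMul_sub, Matrix.vecMul_one, hleft i, sub_smul, one_smul]
  have hUleft : ∀ i k, Matrix.vecMul (v i) (U k) =
      (1 + d / (N0 + d * k) * (lam i - 1)) • v i := by
    intro i k
    rw [hU k, Matrix.vecMul_add, Matrix.vecMul_one, stmt12_vecMul_smul_mat, hAm1 i]
    module
  -- eigen-decomposition of the whole expression
  set μ : Fin N → ℕ → ℝ := fun i t =>
    (lam i - 1) * ∏ j ∈ Finset.range t, (1 + d / (N0 + d * (↑(j + 1) : ℝ)) * (lam i - 1))
    with hμ
  have hprod : ∀ i t, Matrix.vecMul (v i)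
      ((A - 1) * ((List.range t).map (fun j => U (j + 1))).prod) = μ i t • v i := by
    intro i t
    rw [← Matrix.vecMul_vecMul, hAm1 i, Matrix.smul_vecMul,
      stmt12_vecMul_prod U (v i) (fun k => 1 + d / (N0 + d * k) * (lam i - 1))
        (hUleft i) t, smul_smul]
  have hw : ∀ t, Matrix.vecMul Z0 ((A - 1) * ((List.range t).map (fun j => U (j + 1))).prod) =
      ∑ i, (a i * μ i t) • v i := by
    intro t
    rw [hZsum, ← Matrix.vecMulLinear_apply, map_sum]
    refine Finset.sum_congr rfl fun i _ => ?_
    rw [_root_.map_smul, Matrix.vecMulLinear_apply, hprod i t, smul_smul]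
  -- norms of eigenvectors
  have hvnorm : ∀ i, ‖v i‖ ≤ 1 := by
    intro i
    rw [pi_norm_le_iff_of_nonneg (by norm_num)]
    intro x
    have h1 : ‖hA.eigenvectorBasis i‖ = 1 := hA.eigenvectorBasis.orthonormal.1 i
    have h2 : |v i x| ≤ ‖hA.eigenvectorBasis i‖ := by
      rw [EuclideanSpace.norm_eq]
      rw [← Real.sqrt_sq_eq_abs]
      apply Real.sqrt_le_sqrt
      have := Finset.single_le_sum (f := fun y => ‖(hA.eigenvectorBasis i) y‖ ^ 2)
        (fun y _ => by positivity) (Finset.mem_univ x)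
      simpa [Real.norm_eq_abs, sq_abs] using this
    rw [Real.norm_eq_abs]
    linarith
  -- per-eigenvalue bound
  set K : ℝ := 2 * (3 * ((N0 + 2 * d) / d) ^ (1 - lam₁)) with hK
  have hKnn : 0 ≤ K := by positivity
  have hμbound : ∀ i, ∀ t : ℕ, 1 ≤ t → |μ i t| ≤ K * (t : ℝ) ^ (lam₁ - 1) := by
    intro i t ht
    have hvne : v i ≠ 0 := by
      intro h
      apply hA.eigenvectorBasis.orthonormal.ne_zero i
      have : hA.eigenvectorBasis i = L.symm (v i) := (L.symm_apply_apply _).symm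
      rw [this, h, map_zero]
    have hAvi : A.mulVec (v i) = lam i • v i := hA.mulVec_eigenvectorBasis i
    have hper := stmt12_perron hnonneg hrow hvne hAvi
    have hm1 : -1 ≤ lam i := by
      have := abs_le.mp hper
      linarith [this.1]
    rcases heig (lam i) (v i) hvne hAvi with h1 | h1
    · rw [hμ]
      simp only [h1, sub_self, zero_mul, abs_zero]
      positivity
    · rw [hμ, abs_mul]
      have hkey := stmt12_key N0 d (lam i) lam₁ hN0 hd hm1 h1 hlam₁ t ht
      have h2 : |lam i - 1| ≤ 2 := by rw [abs_le]; constructor <;> linarith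
      have h3 : 0 ≤ |∏ j ∈ Finset.range t, (1 + d / (N0 + d * (↑(j + 1) : ℝ)) * (lam i - 1))| :=
        abs_nonneg _
      calc |lam i - 1| * |∏ j ∈ Finset.range t, (1 + d / (N0 + d * (↑(j + 1) : ℝ)) * (lam i - 1))|
          ≤ 2 * ((3 * ((N0 + 2 * d) / d) ^ (1 - lam₁)) * (t : ℝ) ^ (lam₁ - 1)) := by
            apply mul_le_mul h2 hkey h3 (by norm_num)
        _ = K * (t : ℝ) ^ (lam₁ - 1) := by rw [hK]; ring
  -- global bound
  set c : ℝ := (∑ i, |a i|) * K with hc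
  have hcnn : 0 ≤ c := by
    apply mul_nonneg _ hKnn
    exact Finset.sum_nonneg fun i _ => abs_nonneg _
  have hbound : ∀ t : ℕ, 1 ≤ t →
      ‖Matrix.vecMul Z0 ((A - 1) * ((List.range t).map (fun j => U (j + 1))).prod)‖ ≤
        c * (t : ℝ) ^ (lam₁ - 1) := by
    intro t ht
    rw [hw t]
    calc ‖∑ i, (a i * μ i t) • v i‖ ≤ ∑ i, ‖(a i * μ i t) • v i‖ := norm_sum_le _ _
      _ ≤ ∑ i, |a i| * (K * (t : ℝ) ^ (lam₁ - 1)) := by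
          apply Finset.sum_le_sum
          intro i _
          rw [norm_smul, Real.norm_eq_abs, abs_mul]
          calc |a i| * |μ i t| * ‖v i‖ ≤ |a i| * |μ i t| * 1 := by
                apply mul_le_mul_of_nonneg_left (hvnorm i) (by positivity)
            _ = |a i| * |μ i t| := by ring
            _ ≤ |a i| * (K * (t : ℝ) ^ (lam₁ - 1)) :=
                mul_le_mul_of_nonneg_left (hμbound i t ht) (abs_nonneg _)
      _ = c * (t : ℝ) ^ (lam₁ - 1) := by simp [hc, Finset.sum_mul, mul_assoc]
  have hev : ∀ᶠ t : ℕ in atTop,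
      ‖Matrix.vecMul Z0 ((A - 1) * ((List.range t).map (fun j => U (j + 1))).prod)‖ ≤
        c * (t : ℝ) ^ (lam₁ - 1) := by
    filter_upwards [eventually_ge_atTop 1] with t ht using hbound t ht
  refine ⟨⟨c, hev⟩, ?_⟩
  rw [tendsto_zero_iff_norm_tendsto_zero]
  have htend : Tendsto (fun t : ℕ => c * (t : ℝ) ^ (lam₁ - 1)) atTop (nhds 0) := by
    have h1 : Tendsto (fun x : ℝ => x ^ (-(1 - lam₁))) atTop (nhds 0) :=
      tendsto_rpow_neg_atTop (by linarith)
    have h2 : Tendsto (fun t : ℕ => ((t : ℝ)) ^ (lam₁ - 1)) atTop (nhds 0) := by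
      have := h1.comp tendsto_natCast_atTop_atTop (α := ℕ)
      simpa [Function.comp_def, neg_sub] using this
    simpa using h2.const_mul c
  exact squeeze_zero' (Eventually.of_forall fun t => norm_nonneg _) hev htend
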